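/- Let N ≥ 1, 1 ≤ m ≤ N-1, 0 < α < 1, t ≥ 0. Let V = (V_1,...,V_N) be uniformly distributed on the set of binary vectors with exactly m ones, and independently let P_1,...,P_N be i.i.d. Bernoulli(e^{-αt}) and Q_1,...,Q_N be i.i.d. Bernoulli(e^{-t}), all jointly independent. Define Z_i = V_i P_i + (1 - V_i) Q_i. Then the random vector (Z_1,...,Z_N) is negatively dependent: for every subset A ⊆ {1,...,N}, E[∏_{i∈A} Z_i] ≤ ∏_{i∈A} E[Z_i]. -/

import Mathlib

open Finset

/-- Probability weight of an outcome `ω = (v, p, q)`: `v` is uniform on binary vectors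
with exactly `m` ones, `p` is a vector of i.i.d. Bernoulli(`a`) variables and `q` a vector
of i.i.d. Bernoulli(`b`) variables, all jointly independent. -/
noncomputable def ehrenfestWeight (N m : ℕ) (a b : ℝ)
    (ω : (Fin N → Bool) × (Fin N → Bool) × (Fin N → Bool)) : ℝ :=
  (if (Finset.univ.filter (fun i => ω.1 i = true)).card = m
    then (1 : ℝ) / (N.choose m : ℝ) else 0) *
  (∏ i, (if ω.2.1 i then a else 1 - a)) *
  (∏ i, (if ω.2.2 i then b else 1 - b))

/-- `Z_i = V_i P_i + (1 - V_i) Q_i` as a real-valued random variable. -/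
def Zval {N : ℕ} (ω : (Fin N → Bool) × (Fin N → Bool) × (Fin N → Bool))
    (i : Fin N) : ℝ :=
  if ω.1 i then (if ω.2.1 i then 1 else 0) else (if ω.2.2 i then 1 else 0)

lemma bern_sum (N : ℕ) (c : ℝ) (T : Finset (Fin N)) :
    ∑ p : Fin N → Bool, (∏ i, (if p i then c else 1 - c)) *
      ∏ i ∈ T, (if p i then (1:ℝ) else 0) = c ^ T.card := by
  have h : ∀ p : Fin N → Bool,
      (∏ i, (if p i then c else 1 - c)) * ∏ i ∈ T, (if p i then (1:ℝ) else 0)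
        = ∏ i, ((if p i then c else 1 - c) *
            (if i ∈ T then (if p i then (1:ℝ) else 0) else 1)) := by
    intro p
    rw [Finset.prod_mul_distrib]
    congr 1
    rw [Finset.prod_ite_mem, Finset.univ_inter]
  simp only [h]
  rw [← Fintype.prod_sum (fun i (x : Bool) => (if x then c else 1 - c) *
        (if i ∈ T then (if x then (1:ℝ) else 0) else 1))]
  have h2 : ∀ i : Fin N, (∑ x : Bool, (if x then c else 1 - c) *
        (if i ∈ T then (if x then (1:ℝ) else 0) else 1)) = if i ∈ T then c else 1 := by
    intro i
    rw [Fintype.sum_bool]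
    by_cases hi : i ∈ T <;> simp [hi]
  simp only [h2]
  rw [Finset.prod_ite_mem, Finset.univ_inter, Finset.prod_const]

lemma factor (N m : ℕ) (a b : ℝ) (A : Finset (Fin N)) :
    ∑ ω : (Fin N → Bool) × (Fin N → Bool) × (Fin N → Bool),
      ehrenfestWeight N m a b ω * ∏ i ∈ A, Zval ω i
    = ∑ v : Fin N → Bool,
        (if (Finset.univ.filter (fun i => v i = true)).card = m
          then (1:ℝ) / (N.choose m : ℝ) else 0) * ∏ i ∈ A, (if v i then a else b) := by
  rw [Fintype.sum_prod_type]
  refine Finset.sum_congr rfl fun v _ => ?_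
  rw [Fintype.sum_prod_type]
  set wv : ℝ := if (Finset.univ.filter (fun i => v i = true)).card = m
    then (1:ℝ) / (N.choose m : ℝ) else 0 with hwv
  have hsplit : ∀ p q : Fin N → Bool, (∏ i ∈ A, Zval (v, p, q) i) =
      (∏ i ∈ A.filter (fun i => v i = true), (if p i then (1:ℝ) else 0)) *
      (∏ i ∈ A.filter (fun i => ¬ v i = true), (if q i then (1:ℝ) else 0)) := by
    intro p q
    rw [← Finset.prod_filter_mul_prod_filter_not A (fun i => v i = true)]
    congr 1
    · exact Finset.prod_congr rfl fun i hi => by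
        simp only [Zval, if_pos (Finset.mem_filter.1 hi).2]
    · exact Finset.prod_congr rfl fun i hi => by
        simp only [Zval, if_neg (Finset.mem_filter.1 hi).2]
  have hstep : ∀ p q : Fin N → Bool,
      ehrenfestWeight N m a b (v, p, q) * ∏ i ∈ A, Zval (v, p, q) i
      = wv * (((∏ i, (if p i then a else 1 - a)) *
            ∏ i ∈ A.filter (fun i => v i = true), (if p i then (1:ℝ) else 0)) *
          ((∏ i, (if q i then b else 1 - b)) *
            ∏ i ∈ A.filter (fun i => ¬ v i = true), (if q i then (1:ℝ) else 0))) := by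
    intro p q
    rw [hsplit p q]
    simp only [ehrenfestWeight, hwv]
    ring
  simp only [hstep]
  simp only [← Finset.mul_sum]
  rw [← Finset.sum_mul, bern_sum, bern_sum]
  congr 1
  rw [← Finset.prod_filter_mul_prod_filter_not A (fun i => v i = true)]
  rw [Finset.prod_congr rfl (fun i hi => if_pos (Finset.mem_filter.1 hi).2),
    Finset.prod_congr rfl (fun i hi => if_neg (Finset.mem_filter.1 hi).2),
    Finset.prod_const, Finset.prod_const]

lemma count_eq (N m : ℕ) (T : Finset (Fin N)) (hT : T.card ≤ m) :
    (Finset.univ.filter (fun v : Fin N → Bool =>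
        (Finset.univ.filter (fun i => v i = true)).card = m ∧ ∀ i ∈ T, v i = true)).card
      = (N - T.card).choose (m - T.card) := by
  have hcard : (Finset.univ \ T : Finset (Fin N)).card = N - T.card := by
    rw [Finset.card_sdiff_of_subset (Finset.subset_univ T), Finset.card_univ, Fintype.card_fin]
  rw [← hcard, ← Finset.card_powersetCard (m - T.card) (Finset.univ \ T)]
  apply Finset.card_nbij' (i := fun v => (Finset.univ.filter (fun i => v i = true)) \ T)
    (j := fun s => fun i => decide (i ∈ s ∪ T))
  · intro v hv
    rw [Finset.mem_coe, Finset.mem_filter] at hv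
    obtain ⟨-, hm, hTv⟩ := hv
    have hsub : T ⊆ Finset.univ.filter (fun i => v i = true) := by
      intro i hi; exact Finset.mem_filter.2 ⟨Finset.mem_univ i, hTv i hi⟩
    rw [Finset.mem_coe, Finset.mem_powersetCard]
    constructor
    · exact Finset.sdiff_subset_sdiff (Finset.subset_univ _) le_rfl
    · rw [Finset.card_sdiff_of_subset hsub, hm]
  · intro s hs
    rw [Finset.mem_coe, Finset.mem_powersetCard] at hs
    obtain ⟨hsub, hcards⟩ := hs
    have hdisj : Disjoint s T := by
      intro u hus huT
      intro i hi
      have h1 := hus hi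
      have h2 := huT hi
      have := hsub h1
      rw [Finset.mem_sdiff] at this
      exact absurd h2 this.2
    rw [Finset.mem_coe, Finset.mem_filter]
    refine ⟨Finset.mem_univ _, ?_, ?_⟩
    · have : (Finset.univ.filter (fun i => decide (i ∈ s ∪ T) = true)).card = (s ∪ T).card := by
        congr 1
        ext i
        simp
      rw [this, Finset.card_union_of_disjoint hdisj, hcards]
      omega
    · intro i hi
      simp [Finset.mem_union, hi]
  · intro v hv
    rw [Finset.mem_coe, Finset.mem_filter] at hv
    obtain ⟨-, hm, hTv⟩ := hv
    funext i
    by_cases h : v i = true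
    · simp only [Finset.mem_union, Finset.mem_sdiff, Finset.mem_filter, Finset.mem_univ,
        true_and, h, decide_eq_true_eq]
      by_cases hiT : i ∈ T <;> simp [hiT]
    · have hiT : i ∉ T := fun hiT => h (hTv i hiT)
      simp [Finset.mem_union, Finset.mem_sdiff, Finset.mem_filter, h, hiT]
  · intro s hs
    rw [Finset.mem_coe, Finset.mem_powersetCard] at hs
    obtain ⟨hsub, hcards⟩ := hs
    ext i
    simp only [Finset.mem_sdiff, Finset.mem_filter, Finset.mem_univ, true_and,
      decide_eq_true_eq, Finset.mem_union]
    constructor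
    · rintro ⟨h1 | h1, h2⟩
      · exact h1
      · exact absurd h1 h2
    · intro hi
      have := hsub hi
      rw [Finset.mem_sdiff] at this
      exact ⟨Or.inl hi, this.2⟩

lemma count_zero (N m : ℕ) (T : Finset (Fin N)) (hT : m < T.card) :
    (Finset.univ.filter (fun v : Fin N → Bool =>
        (Finset.univ.filter (fun i => v i = true)).card = m ∧ ∀ i ∈ T, v i = true)).card = 0 := by
  rw [Finset.card_eq_zero, Finset.filter_eq_empty_iff]
  rintro v - ⟨hm, hTv⟩
  have hsub : T ⊆ Finset.univ.filter (fun i => v i = true) := by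
    intro i hi; exact Finset.mem_filter.2 ⟨Finset.mem_univ i, hTv i hi⟩
  have := Finset.card_le_card hsub
  omega

lemma sum_ind (N m : ℕ) (T : Finset (Fin N)) :
    ∑ v : Fin N → Bool,
        (if (Finset.univ.filter (fun i => v i = true)).card = m then (1:ℝ) else 0) *
          ∏ i ∈ T, (if v i then (1:ℝ) else 0)
      = if T.card ≤ m then (((N - T.card).choose (m - T.card) : ℕ) : ℝ) else 0 := by
  have h : ∀ v : Fin N → Bool,
      (if (Finset.univ.filter (fun i => v i = true)).card = m then (1:ℝ) else 0) *
          ∏ i ∈ T, (if v i then (1:ℝ) else 0)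
        = if ((Finset.univ.filter (fun i => v i = true)).card = m ∧ ∀ i ∈ T, v i = true)
          then (1:ℝ) else 0 := by
    intro v
    rw [Finset.prod_boole]
    split_ifs with h1 h2 h3 h4 <;> simp_all
  simp only [h]
  rw [Finset.sum_boole]
  by_cases hT : T.card ≤ m
  · rw [if_pos hT, count_eq N m T hT]
  · rw [if_neg hT, count_zero N m T (by omega)]
    simp

lemma ratio_nat (N m : ℕ) (hm : m ≤ N) : ∀ j, j ≤ m →
    N ^ j * (N - j).choose (m - j) ≤ m ^ j * N.choose m := by
  intro j
  induction j with
  | zero => simp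
  | succ j ih =>
    intro hj
    obtain ⟨e, he⟩ : ∃ e, m - j = e + 1 := ⟨m - j - 1, by omega⟩
    obtain ⟨f, hf⟩ : ∃ f, N - j = f + 1 := ⟨N - j - 1, by omega⟩
    have hef : e ≤ f := by omega
    have hjm : j ≤ m := by omega
    have IH := ih hjm
    rw [he, hf] at IH
    have key : (f + 1) * f.choose e = (f+1).choose (e+1) * (e+1) :=
      Nat.add_one_mul_choose_eq f e
    have hNe : N - (j+1) = f := by omega
    have hme : m - (j+1) = e := by omega
    rw [hNe, hme]
    have h1 : N * (e + 1) ≤ m * (f + 1) := by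
      have hN : N = j + 1 + f := by omega
      have hM : m = j + 1 + e := by omega
      nlinarith
    have main : N ^ (j+1) * f.choose e * (f + 1) ≤ m ^ (j+1) * N.choose m * (f + 1) := by
      calc N ^ (j+1) * f.choose e * (f + 1)
          = (N * (e+1)) * (N ^ j * (f+1).choose (e+1)) := by
            rw [show N ^ (j+1) * f.choose e * (f + 1) = N * ((f+1) * f.choose e) * N ^ j by ring,
              key]; ring
        _ ≤ (m * (f+1)) * (m ^ j * N.choose m) := Nat.mul_le_mul h1 IH
        _ = m ^ (j+1) * N.choose m * (f + 1) := by ring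
    exact Nat.le_of_mul_le_mul_right main (by omega)

theorem Z_negatively_dependent
    (N m : ℕ) (hN : 1 ≤ N) (hm1 : 1 ≤ m) (hm2 : m ≤ N - 1)
    (α t : ℝ) (hα0 : 0 < α) (hα1 : α < 1) (ht : 0 ≤ t)
    (A : Finset (Fin N)) :
    ∑ ω : (Fin N → Bool) × (Fin N → Bool) × (Fin N → Bool),
        ehrenfestWeight N m (Real.exp (-(α * t))) (Real.exp (-t)) ω *
          ∏ i ∈ A, Zval ω i ≤
      ∏ i ∈ A,
        ∑ ω : (Fin N → Bool) × (Fin N → Bool) × (Fin N → Bool),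
          ehrenfestWeight N m (Real.exp (-(α * t))) (Real.exp (-t)) ω * Zval ω i := by
  have hm : m ≤ N := by omega
  set a := Real.exp (-(α * t)) with hadef
  set b := Real.exp (-t) with hbdef
  have hb0 : (0:ℝ) < b := Real.exp_pos _
  have hba : b ≤ a := Real.exp_le_exp.2 (by nlinarith)
  have hab : (0:ℝ) ≤ a - b := sub_nonneg.2 hba
  have hC : (0:ℝ) < (N.choose m : ℝ) := by exact_mod_cast Nat.choose_pos hm
  have hN0 : (0:ℝ) < (N:ℝ) := by exact_mod_cast hN
  set wv : (Fin N → Bool) → ℝ := fun v =>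
    if (Finset.univ.filter (fun i => v i = true)).card = m
      then (1:ℝ) / (N.choose m : ℝ) else 0 with hwv
  have hwv' : ∀ v, wv v = (1 / (N.choose m : ℝ)) *
      (if (Finset.univ.filter (fun i => v i = true)).card = m then (1:ℝ) else 0) := by
    intro v; simp only [hwv]; split_ifs <;> ring
  have hPB : ∀ T : Finset (Fin N),
      ∑ v : Fin N → Bool, wv v * ∏ i ∈ T, (if v i then (1:ℝ) else 0)
        = (1 / (N.choose m : ℝ)) *
          (if T.card ≤ m then (((N - T.card).choose (m - T.card) : ℕ) : ℝ) else 0) := by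
    intro T
    rw [← sum_ind N m T, Finset.mul_sum]
    exact Finset.sum_congr rfl fun v _ => by rw [hwv' v]; ring
  have hPB_le : ∀ T : Finset (Fin N),
      ∑ v : Fin N → Bool, wv v * ∏ i ∈ T, (if v i then (1:ℝ) else 0)
        ≤ ((m:ℝ)/(N:ℝ)) ^ T.card := by
    intro T
    rw [hPB T]
    by_cases hT : T.card ≤ m
    · rw [if_pos hT]
      have hnat := ratio_nat N m hm T.card hT
      have hreal : ((N:ℝ)) ^ T.card * (((N - T.card).choose (m - T.card) : ℕ) : ℝ)
          ≤ ((m:ℝ)) ^ T.card * (N.choose m : ℝ) := by exact_mod_cast hnat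
      have hpow : (0:ℝ) < (N:ℝ) ^ T.card := by positivity
      rw [div_pow, one_div_mul_eq_div, div_le_div_iff₀ hC hpow]
      nlinarith
    · rw [if_neg hT, mul_zero]
      positivity
  -- single coordinate expectation
  have hE : ∀ i : Fin N, (∑ v : Fin N → Bool, wv v * (if v i then a else b))
      = b + (a - b) * ((m:ℝ)/(N:ℝ)) := by
    intro i
    have h1 : ∀ v : Fin N → Bool, wv v * (if v i then a else b)
        = b * wv v + (a - b) * (wv v * (if v i then (1:ℝ) else 0)) := by
      intro v; by_cases h : v i <;> simp [h] <;> ring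
    simp only [h1]
    rw [Finset.sum_add_distrib, ← Finset.mul_sum, ← Finset.mul_sum]
    have htot : (∑ v : Fin N → Bool, wv v) = 1 := by
      have h := hPB ∅
      simp only [Finset.prod_empty, mul_one, Finset.card_empty, Nat.sub_zero,
        Nat.zero_le, if_pos] at h
      rw [h]
      field_simp
    have hsingle : (∑ v : Fin N → Bool, wv v * (if v i then (1:ℝ) else 0)) = (m:ℝ)/(N:ℝ) := by
      have h := hPB {i}
      simp only [Finset.prod_singleton, Finset.card_singleton, if_pos hm1] at h
      rw [h]
      have hid : N * (N - 1).choose (m - 1) = N.choose m * m := by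
        have h2 := Nat.add_one_mul_choose_eq (N - 1) (m - 1)
        have hsN : N - 1 + 1 = N := by omega
        have hsm : m - 1 + 1 = m := by omega
        rwa [hsN, hsm] at h2
      have hid' : (N:ℝ) * ((N - 1).choose (m - 1) : ℕ) = (N.choose m : ℝ) * m := by
        exact_mod_cast hid
      field_simp
      nlinarith
    rw [htot, hsingle]
    ring
  -- rewrite both sides via factor
  rw [factor N m a b A]
  have hfac_i : ∀ i : Fin N,
      (∑ ω : (Fin N → Bool) × (Fin N → Bool) × (Fin N → Bool),
        ehrenfestWeight N m a b ω * Zval ω i) = b + (a - b) * ((m:ℝ)/(N:ℝ)) := by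
    intro i
    have h := factor N m a b {i}
    simp only [Finset.prod_singleton] at h
    rw [h]
    exact hE i
  rw [Finset.prod_congr rfl (fun i _ => hfac_i i), Finset.prod_const]
  -- expand products
  have hlhs : ∀ v : Fin N → Bool, (∏ i ∈ A, (if v i then a else b))
      = ∑ B ∈ A.powerset,
          ((a-b) ^ B.card * ∏ i ∈ B, (if v i then (1:ℝ) else 0)) * b ^ (A \ B).card := by
    intro v
    calc ∏ i ∈ A, (if v i then a else b)
        = ∏ i ∈ A, ((a - b) * (if v i then (1:ℝ) else 0) + b) :=
          Finset.prod_congr rfl (fun i _ => by by_cases h : v i <;> simp [h])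
      _ = ∑ B ∈ A.powerset, (∏ i ∈ B, (a - b) * (if v i then (1:ℝ) else 0)) * ∏ _i ∈ A \ B, b :=
          Finset.prod_add _ _ _
      _ = _ := Finset.sum_congr rfl fun B _ => by
          rw [Finset.prod_mul_distrib, Finset.prod_const, Finset.prod_const]
  have hrhs : (b + (a - b) * ((m:ℝ)/(N:ℝ))) ^ A.card
      = ∑ B ∈ A.powerset,
          ((a-b) ^ B.card * ((m:ℝ)/(N:ℝ)) ^ B.card) * b ^ (A \ B).card := by
    rw [← Finset.prod_const (b := b + (a - b) * ((m:ℝ)/(N:ℝ))) (s := A)]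
    calc ∏ _i ∈ A, (b + (a - b) * ((m:ℝ)/(N:ℝ)))
        = ∏ _i ∈ A, ((a - b) * ((m:ℝ)/(N:ℝ)) + b) := by
          exact Finset.prod_congr rfl fun i _ => by ring
      _ = ∑ B ∈ A.powerset, (∏ _i ∈ B, (a - b) * ((m:ℝ)/(N:ℝ))) * ∏ _i ∈ A \ B, b :=
          Finset.prod_add _ _ _
      _ = _ := Finset.sum_congr rfl fun B _ => by
          rw [Finset.prod_const, Finset.prod_const, mul_pow]
  simp only [hlhs]
  rw [hrhs]
  calc ∑ v : Fin N → Bool, wv v * ∑ B ∈ A.powerset,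
        ((a-b) ^ B.card * ∏ i ∈ B, (if v i then (1:ℝ) else 0)) * b ^ (A \ B).card
      = ∑ B ∈ A.powerset, ((a-b) ^ B.card * b ^ (A \ B).card) *
          ∑ v : Fin N → Bool, wv v * ∏ i ∈ B, (if v i then (1:ℝ) else 0) := by
        simp only [Finset.mul_sum]
        rw [Finset.sum_comm]
        exact Finset.sum_congr rfl fun B _ => Finset.sum_congr rfl fun v _ => by ring
    _ ≤ ∑ B ∈ A.powerset, ((a-b) ^ B.card * b ^ (A \ B).card) * ((m:ℝ)/(N:ℝ)) ^ B.card := by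
        refine Finset.sum_le_sum fun B _ => ?_
        exact mul_le_mul_of_nonneg_left (hPB_le B)
          (mul_nonneg (pow_nonneg hab _) (pow_nonneg hb0.le _))
    _ = ∑ B ∈ A.powerset, (a-b) ^ B.card * ((m:ℝ)/(N:ℝ)) ^ B.card * b ^ (A \ B).card :=
        Finset.sum_congr rfl fun B _ => by ring
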